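/- arXiv:1805.09880 — 2 statements merged into one kernel-verified Lean document; each statement's English description precedes it below -/
import Mathlib

section
/- Let φ = ∃x_1∀x_2…∃x_{n-1}∀x_n.ψ be a quantified Boolean formula with ψ quantifier-free and n even, and let (M,w0), the multi-pointed event models (E_i,E_i) for 1 ≤ i ≤ n, and χ be as in the single-agent multi-pointed PSPACE-hardness construction. Then M,w0 ⊨ χ if and only if φ is true. -/
namespace DELMC

inductive DForm (Agent : Type) : Type
  | atom : ℕ → DForm Agent
  | neg : DForm Agent → DForm Agent
  | and : DForm Agent → DForm Agent → DForm Agent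
  | K : Agent → DForm Agent → DForm Agent
  | upd : (k : ℕ) → (Agent → Fin (k+1) → Fin (k+1) → Bool) →
      (Fin (k+1) → DForm Agent) → (Fin (k+1) → List (ℕ × Bool)) →
      (Fin (k+1) → Bool) → DForm Agent → DForm Agent

structure EpiModel (Agent : Type) where
  World : Type
  rel : Agent → World → World → Prop
  val : World → ℕ → Prop

def postEval (l : List (ℕ × Bool)) (p : ℕ) : Option Bool :=
  (l.find? (fun q => q.1 == p)).map Prod.snd

def updModel {Agent : Type} (M : EpiModel Agent) (k : ℕ)
    (S : Agent → Fin (k+1) → Fin (k+1) → Bool)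
    (dom : M.World → Fin (k+1) → Prop)
    (post : Fin (k+1) → List (ℕ × Bool)) : EpiModel Agent where
  World := { p : M.World × Fin (k+1) // dom p.1 p.2 }
  rel a u v := M.rel a u.1.1 v.1.1 ∧ S a u.1.2 v.1.2 = true
  val u p :=
    match postEval (post u.1.2) p with
    | some b => b = true
    | none => M.val u.1.1 p

def Sat {Agent : Type} : (M : EpiModel Agent) → M.World → DForm Agent → Prop
  | M, w, .atom p => M.val w p
  | M, w, .neg φ => ¬ Sat M w φ
  | M, w, .and φ ψ => Sat M w φ ∧ Sat M w ψ
  | M, w, .K a φ => ∀ v, M.rel a w v → Sat M v φ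
  | M, w, .upd k S pre post des φ =>
      ∀ e, des e = true → ∀ h : Sat M w (pre e),
        Sat (updModel M k S (fun v e' => Sat M v (pre e')) post) ⟨(w, e), h⟩ φ

/-- `K̂_a φ := ¬ K_a ¬ φ`. -/
def khat {Agent : Type} (a : Agent) (φ : DForm Agent) : DForm Agent := .neg (.K a (.neg φ))

/-- The formula `⊤` (as the abbreviation `¬(p ∧ ¬p)`). -/
def dtop {Agent : Type} : DForm Agent := .neg (.and (.atom 0) (.neg (.atom 0)))

/-- Implication `φ → ψ`, as the abbreviation `¬(φ ∧ ¬ψ)`. -/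
def dimp {Agent : Type} (φ ψ : DForm Agent) : DForm Agent := .neg (.and φ (.neg ψ))

/-- Conjunction of a list of formulas. -/
def bigAnd {Agent : Type} : List (DForm Agent) → DForm Agent
  | [] => dtop
  | [φ] => φ
  | φ :: rest => .and φ (bigAnd rest)

/-- An epistemic model is S5 if all relations are equivalence relations. -/
def EpiModel.IsS5 {Agent : Type} (M : EpiModel Agent) : Prop := ∀ a, Equivalence (M.rel a)

/-- A list of literals contains no complementary pair. -/
def NoComplPair (l : List (ℕ × Bool)) : Prop := ∀ p : ℕ, ¬ ((p, true) ∈ l ∧ (p, false) ∈ l)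

/-- All update modalities in the formula use S5 event models (with no constraint on
designated events or postconditions beyond non-complementarity). -/
def DForm.updsS5 {Agent : Type} : DForm Agent → Prop
  | .atom _ => True
  | .neg φ => φ.updsS5
  | .and φ ψ => φ.updsS5 ∧ ψ.updsS5
  | .K _ φ => φ.updsS5
  | .upd _ S pre post _ φ =>
      (∀ a, Equivalence (fun i j => S a i j = true)) ∧
      (∀ e, NoComplPair (post e)) ∧ (∀ e, (pre e).updsS5) ∧ φ.updsS5

/-- All update modalities are single-pointed (exactly one designated event). -/
def DForm.updsSingle {Agent : Type} : DForm Agent → Prop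
  | .atom _ => True
  | .neg φ => φ.updsSingle
  | .and φ ψ => φ.updsSingle ∧ ψ.updsSingle
  | .K _ φ => φ.updsSingle
  | .upd _ _ pre _ des φ =>
      (∃! e, des e = true) ∧ (∀ e, (pre e).updsSingle) ∧ φ.updsSingle

/-- All update modalities have empty postconditions. -/
def DForm.updsNoPost {Agent : Type} : DForm Agent → Prop
  | .atom _ => True
  | .neg φ => φ.updsNoPost
  | .and φ ψ => φ.updsNoPost ∧ ψ.updsNoPost
  | .K _ φ => φ.updsNoPost
  | .upd _ _ pre post _ φ =>
      (∀ e, post e = []) ∧ (∀ e, (pre e).updsNoPost) ∧ φ.updsNoPost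

/-- The formula contains no update modalities (it is a formula of basic epistemic logic). -/
def DForm.noUpd {Agent : Type} : DForm Agent → Prop
  | .atom _ => True
  | .neg φ => φ.noUpd
  | .and φ ψ => φ.noUpd ∧ ψ.noUpd
  | .K _ φ => φ.noUpd
  | .upd _ _ _ _ _ _ => False

/-- All propositional variables occurring in the formula belong to `s`. -/
def DForm.atomsSub {Agent : Type} (s : Set ℕ) : DForm Agent → Prop
  | .atom p => p ∈ s
  | .neg φ => φ.atomsSub s
  | .and φ ψ => φ.atomsSub s ∧ ψ.atomsSub s
  | .K _ φ => φ.atomsSub s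
  | .upd _ _ pre post _ φ =>
      (∀ e, (pre e).atomsSub s) ∧ (∀ e q, q ∈ post e → q.1 ∈ s) ∧ φ.atomsSub s

/-- Event models (with events `Fin (k+1)`, hence finite and nonempty). -/
structure EvtModel (Agent : Type) where
  k : ℕ
  S : Agent → Fin (k+1) → Fin (k+1) → Bool
  pre : Fin (k+1) → DForm Agent
  post : Fin (k+1) → List (ℕ × Bool)

def EvtModel.IsS5 {Agent : Type} (E : EvtModel Agent) : Prop :=
  ∀ a, Equivalence (fun i j => E.S a i j = true)

def EvtModel.NoPost {Agent : Type} (E : EvtModel Agent) : Prop := ∀ e, E.post e = []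

/-- The product update `M ⊗ E` of an epistemic model with an event model. -/
def EpiModel.update {Agent : Type} (M : EpiModel Agent) (E : EvtModel Agent) : EpiModel Agent :=
  updModel M E.k E.S (fun w e => Sat M w (E.pre e)) E.post

/-- The single-pointed update modality `[E, d]φ` as a formula. -/
def updSingle {Agent : Type} (E : EvtModel Agent) (d : Fin (E.k+1)) (φ : DForm Agent) :
    DForm Agent :=
  .upd E.k E.S E.pre E.post (fun e => decide (e = d)) φ

/-- The multi-pointed update modality `[E, E_d]φ` with all events designated. -/
def updAll {Agent : Type} (E : EvtModel Agent) (φ : DForm Agent) : DForm Agent :=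
  .upd E.k E.S E.pre E.post (fun _ => true) φ

/-- The submodel of `M` induced by the set `U` of worlds. -/
def EpiModel.restrict {Agent : Type} (M : EpiModel Agent) (U : M.World → Prop) :
    EpiModel Agent where
  World := {w : M.World // U w}
  rel a u v := M.rel a u.1 v.1
  val u p := M.val u.1 p

/-- `Z` is a bisimulation between the models `M` and `N`. -/
def IsBisim {Agent : Type} (M N : EpiModel Agent) (Z : M.World → N.World → Prop) : Prop :=
  ∀ u u', Z u u' →
    (∀ p, M.val u p ↔ N.val u' p) ∧
    (∀ a v, M.rel a u v → ∃ v', N.rel a u' v' ∧ Z v v') ∧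
    (∀ a v', N.rel a u' v' → ∃ v, M.rel a u v ∧ Z v v')

/-- The pointed models `(M, w)` and `(N, v)` are bisimilar. -/
def Bisimilar {Agent : Type} (M : EpiModel Agent) (w : M.World)
    (N : EpiModel Agent) (v : N.World) : Prop :=
  ∃ Z, IsBisim M N Z ∧ Z w v

/-- Quantifier-free propositional formulas. -/
inductive PropForm : Type
  | atom : ℕ → PropForm
  | neg : PropForm → PropForm
  | and : PropForm → PropForm → PropForm

def PropForm.eval (α : ℕ → Bool) : PropForm → Bool
  | .atom p => α p
  | .neg φ => !(φ.eval α)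
  | .and φ ψ => φ.eval α && ψ.eval α

def PropForm.atomsSub (s : Set ℕ) : PropForm → Prop
  | .atom p => p ∈ s
  | .neg φ => φ.atomsSub s
  | .and φ ψ => φ.atomsSub s ∧ ψ.atomsSub s

/-- `β` is lexicographically larger than `α` w.r.t. the ordering `x_1 ≺ … ≺ x_n`
(variable `x_i` is the propositional variable `i`). -/
def LexGT (n : ℕ) (β α : ℕ → Bool) : Prop :=
  ∃ i, 1 ≤ i ∧ i ≤ n ∧ β i = true ∧ α i = false ∧ ∀ j, 1 ≤ j → j < i → β j = α j

/-- `α` is the lexicographically maximal assignment satisfying `ψ` (w.r.t. `x_1 ≺ … ≺ x_n`). -/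
def IsLexMaxSat (n : ℕ) (ψ : PropForm) (α : ℕ → Bool) : Prop :=
  ψ.eval α = true ∧ ∀ β, ψ.eval β = true → ¬ LexGT n β α

/-- Truth of the partially quantified Boolean formula `Q_i x_i … Q_n x_n. ψ` under an
assignment, where `Q_j = ∃` for odd `j` and `Q_j = ∀` for even `j`; the first argument is
the number of remaining quantifiers (i.e. `n + 1 - i`), the second is the index `i`. -/
def QBFAux (ψ : PropForm) : ℕ → ℕ → (ℕ → Bool) → Prop
  | 0, _, α => ψ.eval α = true
  | m+1, i, α =>
    if i % 2 = 1 then ∃ b, QBFAux ψ m (i+1) (Function.update α i b)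
    else ∀ b, QBFAux ψ m (i+1) (Function.update α i b)

/-- Truth of the quantified Boolean formula `∃x_1 ∀x_2 … Q_n x_n. ψ`. -/
def QBFTrue (n : ℕ) (ψ : PropForm) : Prop := QBFAux ψ n 1 (fun _ => false)

/-- Concrete finite epistemic models, suitable as inputs of algorithms. -/
structure FinModel (Agent : Type) where
  m : ℕ
  rel : Agent → Fin (m+1) → Fin (m+1) → Bool
  val : Fin (m+1) → List ℕ

def FinModel.toEpi {Agent : Type} (M : FinModel Agent) : EpiModel Agent where
  World := Fin (M.m+1)
  rel a u v := M.rel a u v = true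
  val w p := p ∈ M.val w

def FinModel.IsS5 {Agent : Type} (M : FinModel Agent) : Prop :=
  ∀ a, Equivalence (fun u v => M.rel a u v = true)


/-! ### The Δ₂ᵖ-hardness construction (single agent, postconditions).
Variable `z` is the propositional variable `0`; variable `x_i` is `i`. -/

/-- The embedding of propositional formulas into the (dynamic) epistemic language. -/
def PropForm.toDForm {Agent : Type} : PropForm → DForm Agent
  | .atom p => .atom p
  | .neg φ => .neg φ.toDForm
  | .and φ ψ => .and φ.toDForm ψ.toDForm

/-- The initial model of the Δ₂ᵖ-hardness construction: worlds `w₀ = 0` (making exactly `z`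
true) and `w₁ = 1` (making everything false), fully `a`-related. -/
def deltaM : EpiModel Unit where
  World := Fin 2
  rel _ _ _ := True
  val w p := w = 0 ∧ p = 0

def deltaW0 : deltaM.World := (0 : Fin 2)

/-- The event model `(E_i, e_i)`: three mutually related events; designated event `0` with
precondition `z`; event `1` with precondition `¬z` and postcondition `{x_i}`; event `2`
with precondition `¬z` and empty postcondition. -/
def deltaE (i : ℕ) : EvtModel Unit where
  k := 2
  S _ _ _ := true
  pre e := if e = 0 then .atom 0 else .neg (.atom 0)
  post e := if e = 1 then [(i, true)] else []

/-- The event model `(E'_i, e'_i)`: designated event `0` with precondition `z`; event `1`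
with precondition `¬z ∧ K̂_a(x_i ∧ φ)` and postcondition `{x_i}`; event `2` with
precondition `¬z ∧ ¬K̂_a(x_i ∧ φ)` and postcondition `{¬x_i}`. -/
def deltaE' (i : ℕ) (ψ : PropForm) : EvtModel Unit where
  k := 2
  S _ _ _ := true
  pre e :=
    if e = 0 then .atom 0
    else if e = 1 then .and (.neg (.atom 0)) (khat () (.and (.atom i) ψ.toDForm))
    else .and (.neg (.atom 0)) (.neg (khat () (.and (.atom i) ψ.toDForm)))
  post e := if e = 1 then [(i, true)] else if e = 2 then [(i, false)] else []

/-- The formula `χ = [E_1,e_1]…[E_n,e_n][E'_1,e'_1]…[E'_n,e'_n] K̂_a x_n`. -/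
def deltaChi (n : ℕ) (ψ : PropForm) : DForm Unit :=
  ((List.range n).map (fun j => deltaE (j+1))).foldr (fun E acc => updSingle E 0 acc)
    (((List.range n).map (fun j => deltaE' (j+1) ψ)).foldr (fun E acc => updSingle E 0 acc)
      (khat () (.atom n)))

/-- The model `M' = M ⊗ E_1 ⊗ … ⊗ E_n`. -/
def deltaM' (n : ℕ) : EpiModel Unit :=
  (((List.range n).map (fun j => deltaE (j+1))).foldl EpiModel.update deltaM)

/-- The model `M'' = M ⊗ E_1 ⊗ … ⊗ E_n ⊗ E'_1 ⊗ … ⊗ E'_n`. -/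
def deltaM'' (n : ℕ) (ψ : PropForm) : EpiModel Unit :=
  (((List.range n).map (fun j => deltaE' (j+1) ψ)).foldl EpiModel.update (deltaM' n))

/-! ### The single-agent multi-pointed PSPACE-hardness construction.
Variable `x_i` is the propositional variable `i`. -/

/-- The group of worlds corresponding to a truth assignment `α`: a world `none` making
no variable true and, for each `j` with `α x_j = 1`, a world `some j` making exactly `x_j`
true; all worlds mutually `a`-related. -/
def groupModel1 (n : ℕ) (α : ℕ → Bool) : EpiModel Unit where
  World := {o : Option (Fin n) // ∀ j : Fin n, o = some j → α (j.1+1) = true}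
  rel _ _ _ := True
  val w p := ∃ j : Fin n, w.1 = some j ∧ p = j.1 + 1

/-- The designated world of the group of worlds corresponding to `α`. -/
def groupW0 (n : ℕ) (α : ℕ → Bool) : (groupModel1 n α).World :=
  ⟨none, fun _ h => nomatch h⟩

/-- The multi-pointed event model `(E_i, E_i)`: two events, both designated, with
preconditions `⊤` and `¬x_i`, empty postconditions, and only reflexive relations. -/
def qEvt (i : ℕ) : EvtModel Unit where
  k := 1
  S _ e f := decide (e = f)
  pre e := if e = 0 then dtop else .neg (.atom i)
  post _ := []

/-- `χ'`: the result of replacing every variable `x_i` in `ψ` by `K̂_a x_i`. -/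
def propKhat : PropForm → DForm Unit
  | .atom p => khat () (.atom p)
  | .neg φ => .neg (propKhat φ)
  | .and φ ψ => .and (propKhat φ) (propKhat ψ)

/-- `qChiAux ψ' m i` is the formula `⟨E_i,E_i⟩[E_{i+1},E_{i+1}]…ψ'` (`m` operators,
diamond at odd indices, box at even indices). -/
def qChiAux (ψ' : DForm Unit) : ℕ → ℕ → DForm Unit
  | 0, _ => ψ'
  | m+1, i =>
    if i % 2 = 1 then .neg (updAll (qEvt i) (.neg (qChiAux ψ' m (i+1))))
    else updAll (qEvt i) (qChiAux ψ' m (i+1))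

/-- The formula `χ = ⟨E_1,E_1⟩[E_2,E_2]…⟨E_{n-1},E_{n-1}⟩[E_n,E_n]χ'`. -/
def qChi (n : ℕ) (ψ : PropForm) : DForm Unit := qChiAux (propKhat ψ) n 1


/-! ### The two-agent PSPACE-hardness construction.
Agents: `a = 0`, `b = 1` (of type `Fin 2`). Propositional variables: `z_0 = 0`,
`z_1 = 1`, `z_2 = 2`. Variable `x_j` of the QBF corresponds to the z1-chain of length `j`. -/

/-- The underlying worlds of a group of worlds, possibly together with z2-chains:
the central world, the worlds `z1 j k` (position `k` in the z1-chain of length `j+1`,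
which represents the variable `x_{j+1}`), and the worlds `z2 i k` (position `k` in the
z2-chain of length `i+1`). -/
inductive GWBase (n m : ℕ) : Type
  | central : GWBase n m
  | z1 : (j : Fin n) → Fin (j.1+2) → GWBase n m
  | z2 : (i : Fin m) → Fin (i.1+2) → GWBase n m

/-- Membership in the `a`-clique: the central world and the first worlds of z1-chains. -/
def aClique {n m : ℕ} : GWBase n m → Prop
  | .central => True
  | .z1 _ k => k.1 = 0
  | .z2 _ _ => False

/-- Membership in the `b`-clique: the central world and the first worlds of z2-chains. -/
def bClique {n m : ℕ} : GWBase n m → Prop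
  | .central => True
  | .z1 _ _ => False
  | .z2 _ k => k.1 = 0

/-- Chain edges: consecutive positions of a z1-chain are related alternately by
`b`, `a`, `b`, … (starting with `b`), and those of a z2-chain alternately by
`a`, `b`, `a`, … (starting with `a`). -/
def chainEdge {n m : ℕ} (ag : Fin 2) : GWBase n m → GWBase n m → Prop
  | .z1 j k, .z1 j' k' =>
      j.1 = j'.1 ∧ ((k'.1 = k.1 + 1 ∧ ag = (if k.1 % 2 = 0 then 1 else 0)) ∨
        (k.1 = k'.1 + 1 ∧ ag = (if k'.1 % 2 = 0 then 1 else 0)))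
  | .z2 i k, .z2 i' k' =>
      i.1 = i'.1 ∧ ((k'.1 = k.1 + 1 ∧ ag = (if k.1 % 2 = 0 then 0 else 1)) ∨
        (k.1 = k'.1 + 1 ∧ ag = (if k'.1 % 2 = 0 then 0 else 1)))
  | _, _ => False

/-- The accessibility relations on `GWBase n m`. -/
def gwRel {n m : ℕ} (ag : Fin 2) (u v : GWBase n m) : Prop :=
  u = v ∨ (ag = 0 ∧ aClique u ∧ aClique v) ∨ (ag = 1 ∧ bClique u ∧ bClique v) ∨
    chainEdge ag u v

/-- The valuation on `GWBase n m`: the central world makes exactly `z_1` and `z_2` true,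
the first world of a chain makes exactly `z_1` (resp. `z_2`) true, the last world of a
chain makes exactly `z_0` true, and all other worlds make no variable true. -/
def gwVal {n m : ℕ} : GWBase n m → ℕ → Prop
  | .central, p => p = 1 ∨ p = 2
  | .z1 j k, p => (k.1 = 0 ∧ p = 1) ∨ (k.1 = j.1 + 1 ∧ p = 0)
  | .z2 i k, p => (k.1 = 0 ∧ p = 2) ∨ (k.1 = i.1 + 1 ∧ p = 0)

/-- The group of worlds representing the truth assignment `α` to `x_1, …, x_n`
(containing a z1-chain of length `j` exactly when `α x_j = 1`), together with
z2-chains of lengths `1, …, m`. -/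
def groupModel2 (n m : ℕ) (α : ℕ → Bool) : EpiModel (Fin 2) where
  World := {u : GWBase n m // ∀ (j : Fin n) (k : Fin (j.1+2)), u = GWBase.z1 j k → α (j.1+1) = true}
  rel ag u v := gwRel ag u.1 v.1
  val u p := gwVal u.1 p

/-- The central (designated) world of `groupModel2 n m α`. -/
def central2 (n m : ℕ) (α : ℕ → Bool) : (groupModel2 n m α).World :=
  ⟨.central, fun _ _ h => nomatch h⟩

/-- The pair of formulas `(χ^a_j, χ^b_j)`. -/
def chiAB : ℕ → DForm (Fin 2) × DForm (Fin 2)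
  | 0 => (.atom 0, .atom 0)
  | j+1 =>
    (khat 0 (.and (.neg (.atom 1)) (.and (.neg (.atom 2)) (chiAB j).2)),
     khat 1 (.and (.neg (.atom 1)) (.and (.neg (.atom 2)) (chiAB j).1)))

def chiA (j : ℕ) : DForm (Fin 2) := (chiAB j).1
def chiB (j : ℕ) : DForm (Fin 2) := (chiAB j).2

/-- `χ_j = z_1 ∧ ¬z_2 ∧ χ^b_j ∧ ¬χ^b_{j-1}` (for `j ≥ 1`). -/
def chiX (j : ℕ) : DForm (Fin 2) :=
  .and (.atom 1) (.and (.neg (.atom 2)) (.and (chiB j) (.neg (chiB (j-1)))))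

/-- `χ'_j = ¬z_1 ∧ z_2 ∧ χ^a_j ∧ ¬χ^a_{j-1}` (for `j ≥ 1`). -/
def chiX' (j : ℕ) : DForm (Fin 2) :=
  .and (.neg (.atom 1)) (.and (.atom 2) (.and (chiA j) (.neg (chiA (j-1)))))

/-- The event model `(E_i, e_i)` of the two-agent construction: events `f^1_i, …, f^5_i`
are `0, …, 4`; `{0,1,2}` is a `b`-clique; `1 S_a 3` and `2 S_a 4`; preconditions
`⊤, ⊤, ⊤, ¬χ'_i, ¬χ'_i ∧ ¬χ_i`; empty postconditions; designated event `0`. -/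
def twoEvt (i : ℕ) : EvtModel (Fin 2) where
  k := 4
  S ag e f := decide (e = f) ||
    (if ag = 1 then decide (e.1 ≤ 2 ∧ f.1 ≤ 2)
     else decide ((e.1 = 1 ∧ f.1 = 3) ∨ (e.1 = 3 ∧ f.1 = 1) ∨
       (e.1 = 2 ∧ f.1 = 4) ∨ (e.1 = 4 ∧ f.1 = 2)))
  pre e :=
    if e.1 ≤ 2 then dtop
    else if e.1 = 3 then .neg (chiX' i)
    else .and (.neg (chiX' i)) (.neg (chiX i))
  post _ := []

/-- The conjunction `⋀_{1 ≤ j ≤ i} ¬K̂_b χ'_j`. -/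
def negConj (i : ℕ) : DForm (Fin 2) :=
  bigAnd ((List.range i).map (fun t => .neg (khat 1 (chiX' (t+1)))))

/-- The conjunction `⋀_{i < j ≤ n} K̂_b χ'_j`. -/
def posConj (n i : ℕ) : DForm (Fin 2) :=
  bigAnd ((List.range (n-i)).map (fun t => khat 1 (chiX' (i+1+t))))

/-- The formula `z_1 ∧ z_2 ∧ ⋀_{1≤j≤i} ¬K̂_b χ'_j ∧ ⋀_{i<j≤n} K̂_b χ'_j`. -/
def xiBody (n i : ℕ) : DForm (Fin 2) :=
  .and (.atom 1) (.and (.atom 2) (.and (negConj i) (posConj n i)))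

/-- `ψ'`: the result of replacing every variable `x_i` in `ψ` by `K̂_a χ_i`. -/
def propToXi : PropForm → DForm (Fin 2)
  | .atom p => khat 0 (chiX p)
  | .neg φ => .neg (propToXi φ)
  | .and φ ψ => .and (propToXi φ) (propToXi ψ)

/-- `xiAux n ψ' m i` is the formula `ξ_i` (with `m = n + 1 - i` remaining steps). -/
def xiAux (n : ℕ) (ψ' : DForm (Fin 2)) : ℕ → ℕ → DForm (Fin 2)
  | 0, _ => ψ'
  | m+1, i =>
    if i % 2 = 1 then khat 1 (khat 0 (.and (xiBody n i) (xiAux n ψ' m (i+1))))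
    else .K 1 (.K 0 (dimp (xiBody n i) (xiAux n ψ' m (i+1))))

/-- The formula `ξ = [E_1,e_1]…[E_n,e_n]ξ_1`. -/
def xiFull (n : ℕ) (ψ : PropForm) : DForm (Fin 2) :=
  ((List.range n).map (fun j => twoEvt (j+1))).foldr (fun E acc => updSingle E 0 acc)
    (xiAux n (propToXi ψ) n 1)

/-- The initial model of the two-agent construction (z1-chains of lengths `1, …, n` for
the all-true assignment, z2-chains of lengths `1, …, n`). -/
def twoM (n : ℕ) : EpiModel (Fin 2) := groupModel2 n n (fun _ => true)

/-- The model `M' = M ⊗ E_1 ⊗ … ⊗ E_n` of the two-agent construction. -/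
def twoM' (n : ℕ) : EpiModel (Fin 2) :=
  ((List.range n).map (fun j => twoEvt (j+1))).foldl EpiModel.update (twoM n)

/-! ### The semi-private-announcement PSPACE-hardness construction. -/

/-- The semi-private announcement of `φ₁` versus `φ₂` to the agents `c` with `A c = true`:
two events with preconditions `φ₁` (designated, event `0`) and `φ₂`, empty postconditions,
related by `S_c` exactly for the agents `c` not in `A` (plus reflexive loops). -/
def semiPrivate {Agent : Type} [DecidableEq Agent] (φ₁ φ₂ : DForm Agent) (A : Agent → Bool) :
    EvtModel Agent where
  k := 1
  S c e f := decide (e = f) || !(A c)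
  pre e := if e = 0 then φ₁ else φ₂
  post _ := []

/-- The semi-private announcement `(E^1_i, f^1_i)`: `¬χ'_{i+n}` versus `¬χ'_{i+2n}`,
announced to agent `a`. -/
def spE1 (n i : ℕ) : EvtModel (Fin 2) :=
  semiPrivate (.neg (chiX' (i+n))) (.neg (chiX' (i+2*n))) (fun c => decide (c = 0))

/-- The semi-private announcement `(E^2_i, f^3_i)`: `⊤` versus
`(¬K̂_b χ'_{i+n} ∧ z_2) → ¬χ'_i`, announced to agent `b`. -/
def spE2 (n i : ℕ) : EvtModel (Fin 2) :=
  semiPrivate dtop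
    (dimp (.and (.neg (khat 1 (chiX' (i+n)))) (.atom 2)) (.neg (chiX' i)))
    (fun c => decide (c = 1))

/-- The semi-private announcement `(E^3_i, f^5_i)`: `⊤` versus
`((¬K̂_b χ'_{i+2n} ∧ z_2) → ¬χ'_i) ∧ ((¬K̂_a K̂_b χ'_{i+2n} ∧ z_1) → ¬χ_i)`,
announced to agent `b`. -/
def spE3 (n i : ℕ) : EvtModel (Fin 2) :=
  semiPrivate dtop
    (.and (dimp (.and (.neg (khat 1 (chiX' (i+2*n)))) (.atom 2)) (.neg (chiX' i)))
      (dimp (.and (.neg (khat 0 (khat 1 (chiX' (i+2*n))))) (.atom 1)) (.neg (chiX i))))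
    (fun c => decide (c = 1))

/-- The list of event models `E^1_1, E^2_1, E^3_1, …, E^1_n, E^2_n, E^3_n`. -/
def spList (n : ℕ) : List (EvtModel (Fin 2)) :=
  ((List.range n).map (fun j => [spE1 n (j+1), spE2 n (j+1), spE3 n (j+1)])).flatten

/-- `spXiAux n ψ' m i` is the formula `ξ_i` of the semi-private construction. -/
def spXiAux (n : ℕ) (ψ' : DForm (Fin 2)) : ℕ → ℕ → DForm (Fin 2)
  | 0, _ => ψ'
  | m+1, i =>
    if i % 2 = 1 then
      khat 1 (.and (negConj i) (khat 0 (.and (xiBody n i) (spXiAux n ψ' m (i+1)))))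
    else
      .K 1 (dimp (negConj i) (.K 0 (dimp (xiBody n i) (spXiAux n ψ' m (i+1)))))

/-- The formula `ξ = [E^1_1,f^1_1][E^2_1,f^3_1][E^3_1,f^5_1]…[E^3_n,f^5_n]ξ_1` of the
semi-private construction. -/
def spXiFull (n : ℕ) (ψ : PropForm) : DForm (Fin 2) :=
  (spList n).foldr (fun E acc => updSingle E 0 acc) (spXiAux n (propToXi ψ) n 1)

/-- The initial model of the semi-private construction (z1-chains of lengths `1, …, n`
for the all-true assignment, z2-chains of lengths `1, …, 3n`). -/
def spM (n : ℕ) : EpiModel (Fin 2) := groupModel2 n (3*n) (fun _ => true)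

/-- The model `M' = M ⊗ E^1_1 ⊗ E^2_1 ⊗ E^3_1 ⊗ … ⊗ E^3_n`. -/
def spM' (n : ℕ) : EpiModel (Fin 2) :=
  (spList n).foldl EpiModel.update (spM n)


/-! ### Auxiliary development for Statement 8 -/

open Classical in
/-- Invariant maintained along the updates of the single-agent multi-pointed
construction. -/
structure St8Inv (M : EpiModel Unit) (w : M.World) (γ : ℕ → Bool) : Prop where
  hval : ∀ p, ¬ M.val w p
  huniq : ∀ v p q, M.rel () w v → M.val v p → M.val v q → p = q
  hgamma : ∀ p, γ p = true ↔ ∃ v, M.rel () w v ∧ M.val v p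

lemma sat_dtop {M : EpiModel Unit} (w : M.World) : Sat M w (dtop (Agent := Unit)) := by
  simp only [dtop, Sat]
  tauto

lemma st8_pre_holds {M : EpiModel Unit} {w : M.World} {γ : ℕ → Bool}
    (h : St8Inv M w γ) (i : ℕ) (e : Fin 2) : Sat M w ((qEvt i).pre e) := by
  rcases (by decide : ∀ e : Fin 2, e = 0 ∨ e = 1) e with rfl | rfl
  · simpa [qEvt] using sat_dtop w
  · simp only [qEvt]
    norm_num
    exact fun hc => h.hval i hc

lemma sat_khat_atom {M : EpiModel Unit} {w : M.World} {γ : ℕ → Bool}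
    (h : St8Inv M w γ) (p : ℕ) :
    Sat M w (khat () (.atom p)) ↔ γ p = true := by
  simp only [khat, Sat, h.hgamma]
  push_neg
  rfl

lemma sat_propKhat {M : EpiModel Unit} {w : M.World} {γ : ℕ → Bool}
    (h : St8Inv M w γ) (χ : PropForm) :
    Sat M w (propKhat χ) ↔ χ.eval γ = true := by
  induction χ with
  | atom p => simpa [propKhat, PropForm.eval] using sat_khat_atom h p
  | neg φ ih => simp [propKhat, Sat, PropForm.eval, ih]
  | and φ ψ ihφ ihψ => simp [propKhat, Sat, PropForm.eval, ihφ, ihψ]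

lemma st8_inv_update {M : EpiModel Unit} {w : M.World} {γ : ℕ → Bool}
    (h : St8Inv M w γ) (i : ℕ) (e : Fin 2) (he : Sat M w ((qEvt i).pre e)) :
    St8Inv (M.update (qEvt i)) ⟨(w, e), he⟩
      (fun p => if p = i then (decide (e = 0) && γ i) else γ p) := by
  have hval' : ∀ (u : (M.update (qEvt i)).World) (p : ℕ),
      (M.update (qEvt i)).val u p ↔ M.val u.1.1 p := by
    intro u p
    simp [EpiModel.update, updModel, qEvt, postEval]
  have hrel' : ∀ (u v : (M.update (qEvt i)).World),
      (M.update (qEvt i)).rel () u v ↔ M.rel () u.1.1 v.1.1 ∧ u.1.2 = v.1.2 := by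
    intro u v
    simp [EpiModel.update, updModel, qEvt]
  constructor
  · intro p hp
    exact h.hval p ((hval' _ p).1 hp)
  · intro v p q hrel hp hq
    exact h.huniq v.1.1 p q ((hrel' _ _).1 hrel).1 ((hval' _ p).1 hp) ((hval' _ q).1 hq)
  · intro p
    simp only
    have key : (∃ v, (M.update (qEvt i)).rel () ⟨(w, e), he⟩ v ∧ (M.update (qEvt i)).val v p)
        ↔ ∃ v : M.World, M.rel () w v ∧ Sat M v ((qEvt i).pre e) ∧ M.val v p := by
      constructor
      · rintro ⟨v, hrel, hv⟩
        refine ⟨v.1.1, ((hrel' _ _).1 hrel).1, ?_, (hval' _ _).1 hv⟩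
        have h2 : e = v.1.2 := ((hrel' _ _).1 hrel).2
        rw [h2]
        exact v.2
      · rintro ⟨v, hrel, hpre, hv⟩
        exact ⟨⟨(v, e), hpre⟩, (hrel' _ _).2 ⟨hrel, rfl⟩, (hval' _ _).2 hv⟩
    rw [key]
    rcases (by decide : ∀ e : Fin 2, e = 0 ∨ e = 1) e with rfl | rfl
    · have hpre : ∀ v : M.World, Sat M v ((qEvt i).pre 0) := by
        intro v; exact sat_dtop v
      by_cases hpi : p = i <;>
        simp [hpi, h.hgamma, fun v => hpre v] <;>
        exact ⟨fun ⟨v, hr, hv⟩ => ⟨v, hr, hpre v, hv⟩, fun ⟨v, hr, _, hv⟩ => ⟨v, hr, hv⟩⟩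
    · have hpre : ∀ v : M.World, Sat M v ((qEvt i).pre 1) ↔ ¬ M.val v i := by
        intro v
        simp only [qEvt]
        norm_num
        exact Iff.rfl
      by_cases hpi : p = i
      · subst hpi
        simp only [if_pos rfl]
        constructor
        · intro hc; simp at hc
        · rintro ⟨v, _, hpre1, hv⟩
          exact absurd hv ((hpre v).1 hpre1)
      · simp only [if_neg hpi, h.hgamma]
        constructor
        · rintro ⟨v, hrel, hv⟩
          refine ⟨v, hrel, (hpre v).2 ?_, hv⟩
          intro hvi
          exact hpi (h.huniq v p i hrel hv hvi)
        · rintro ⟨v, hrel, _, hv⟩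
          exact ⟨v, hrel, hv⟩

lemma sat_updAll_qEvt {M : EpiModel Unit} {w : M.World} {γ : ℕ → Bool}
    (h : St8Inv M w γ) (i : ℕ) (φ : DForm Unit) :
    Sat M w (updAll (qEvt i) φ) ↔
      ∀ e : Fin 2, Sat (M.update (qEvt i)) ⟨(w, e), st8_pre_holds h i e⟩ φ := by
  constructor
  · intro H e
    exact H e rfl (st8_pre_holds h i e)
  · intro H e _ h'
    exact H e

open Classical in
lemma st8_main (ψ : PropForm) (n : ℕ) :
    ∀ m i (γ : ℕ → Bool) (M : EpiModel Unit) (w : M.World), St8Inv M w γ →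
      m + i = n + 1 →
      (∀ j, i ≤ j → j ≤ n → γ j = true) →
      (Sat M w (qChiAux (propKhat ψ) m i) ↔ QBFAux ψ m i γ) := by
  intro m
  induction m with
  | zero =>
    intro i γ M w hinv _ _
    simpa [qChiAux, QBFAux] using sat_propKhat hinv ψ
  | succ m ih =>
    intro i γ M w hinv hmi hmono
    have hin : i ≤ n := by omega
    have hγi : γ i = true := hmono i le_rfl hin
    -- for each event e, the new assignment equals `Function.update γ i (decide (e = 0))`
    have hupd : ∀ e : Fin 2,
        (fun p => if p = i then (decide (e = 0) && γ i) else γ p)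
          = Function.update γ i (decide (e = 0)) := by
      intro e
      funext p
      rw [Function.update_apply]
      by_cases hpi : p = i <;> simp [hpi, hγi]
    have hIH : ∀ (e : Fin 2) (he : Sat M w ((qEvt i).pre e)),
        Sat (M.update (qEvt i)) ⟨(w, e), he⟩ (qChiAux (propKhat ψ) m (i+1)) ↔
          QBFAux ψ m (i+1) (Function.update γ i (decide (e = 0))) := by
      intro e he
      have hinv' := st8_inv_update hinv i e he
      rw [hupd e] at hinv'
      refine ih (i+1) _ _ _ hinv' (by omega) ?_
      intro j hj1 hj2
      rw [Function.update_apply, if_neg (by omega)]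
      exact hmono j (by omega) hj2
    have hb : ∀ b : Bool, decide ((if b then (0 : Fin 2) else 1) = 0) = b := by decide
    by_cases hodd : i % 2 = 1
    · -- diamond / ∃
      simp only [qChiAux, QBFAux, if_pos hodd]
      have : Sat M w (.neg (updAll (qEvt i) (.neg (qChiAux (propKhat ψ) m (i+1))))) ↔
          ∃ e : Fin 2, Sat (M.update (qEvt i)) ⟨(w, e), st8_pre_holds hinv i e⟩
            (qChiAux (propKhat ψ) m (i+1)) := by
        show (¬ Sat M w (updAll (qEvt i) (.neg (qChiAux (propKhat ψ) m (i+1))))) ↔ _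
        rw [sat_updAll_qEvt hinv]
        push_neg
        constructor
        · rintro ⟨e, he⟩
          exact ⟨e, not_not.1 he⟩
        · rintro ⟨e, he⟩
          exact ⟨e, not_not.2 he⟩
      rw [this]
      constructor
      · rintro ⟨e, he⟩
        exact ⟨decide (e = 0), (hIH e _).1 he⟩
      · rintro ⟨b, hb'⟩
        refine ⟨if b then 0 else 1, (hIH _ _).2 ?_⟩
        rwa [hb b]
    · -- box / ∀
      simp only [qChiAux, QBFAux, if_neg hodd]
      rw [sat_updAll_qEvt hinv]
      constructor
      · intro H b
        have := (hIH (if b then 0 else 1) (st8_pre_holds hinv i _)).1 (H _)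
        rwa [hb b] at this
      · intro H e
        exact (hIH e _).2 (H (decide (e = 0)))

lemma eval_congr {s : Set ℕ} (ψ : PropForm) (hψ : ψ.atomsSub s) {α β : ℕ → Bool}
    (h : ∀ p ∈ s, α p = β p) : ψ.eval α = ψ.eval β := by
  induction ψ with
  | atom p => exact h p hψ
  | neg φ ih => simp [PropForm.eval, ih hψ]
  | and φ χ ihφ ihχ =>
    simp [PropForm.eval, ihφ hψ.1, ihχ hψ.2]

lemma qbf_congr (n : ℕ) (ψ : PropForm) (hvars : ψ.atomsSub (Set.Icc 1 n)) :
    ∀ m i (α β : ℕ → Bool), m + i = n + 1 → (∀ j, 1 ≤ j → j < i → α j = β j) →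
      (QBFAux ψ m i α ↔ QBFAux ψ m i β) := by
  intro m
  induction m with
  | zero =>
    intro i α β hmi h
    have : ψ.eval α = ψ.eval β := by
      refine eval_congr ψ hvars ?_
      intro p hp
      have hp2 : p ≤ n := hp.2
      exact h p hp.1 (by omega)
    simp [QBFAux, this]
  | succ m ih =>
    intro i α β hmi h
    have step : ∀ b : Bool, QBFAux ψ m (i+1) (Function.update α i b) ↔
        QBFAux ψ m (i+1) (Function.update β i b) := by
      intro b
      refine ih (i+1) _ _ (by omega) ?_
      intro j hj1 hj2
      rw [Function.update_apply, Function.update_apply]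
      by_cases hji : j = i
      · simp [hji]
      · rw [if_neg hji, if_neg hji]
        exact h j hj1 (by omega)
    by_cases hodd : i % 2 = 1 <;>
      simp only [QBFAux, if_pos, if_neg, hodd, if_true, if_false] <;>
      simp [hodd, step]

lemma st8_init_inv (n : ℕ) :
    St8Inv (groupModel1 n (fun _ => true)) (groupW0 n (fun _ => true))
      (fun p => decide (1 ≤ p ∧ p ≤ n)) := by
  constructor
  · intro p hp
    rcases hp with ⟨j, hj, _⟩
    simp [groupW0] at hj
  · intro v p q _ hp hq
    rcases hp with ⟨j, hj, rfl⟩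
    rcases hq with ⟨j', hj', rfl⟩
    rw [hj] at hj'
    rw [Option.some.injEq] at hj'
    rw [hj']
  · intro p
    simp only [decide_eq_true_iff]
    constructor
    · rintro ⟨h1, h2⟩
      refine ⟨⟨some ⟨p - 1, by omega⟩, ?_⟩, trivial, ⟨p - 1, by omega⟩, rfl, by show p = p - 1 + 1; omega⟩
      intro j hj; rfl
    · rintro ⟨v, _, j, hj, rfl⟩
      exact ⟨by omega, by omega⟩

/-- In the single-agent multi-pointed PSPACE-hardness construction, for
every quantified Boolean formula `∃x_1 ∀x_2 … ∃x_{n-1} ∀x_n. ψ` (with `ψ`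
quantifier-free and `n` even): `M, w0 ⊨ χ` if and only if the quantified Boolean formula
is true, where `M` is the group of worlds corresponding to the all-true assignment. -/
theorem statement8 (n : ℕ) (hn : Even n) (hpos : 0 < n) (ψ : PropForm)
    (hvars : ψ.atomsSub (Set.Icc 1 n)) :
    Sat (groupModel1 n (fun _ => true)) (groupW0 n (fun _ => true)) (qChi n ψ) ↔
      QBFTrue n ψ := by
  have h1 := st8_main ψ n n 1 (fun p => decide (1 ≤ p ∧ p ≤ n))
    (groupModel1 n (fun _ => true)) (groupW0 n (fun _ => true)) (st8_init_inv n) rfl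
    (fun j hj1 hj2 => by simp [hj1, hj2])
  have h2 := qbf_congr n ψ hvars n 1 (fun p => decide (1 ≤ p ∧ p ≤ n)) (fun _ => false)
    rfl (fun j hj1 hj2 => by omega)
  exact h1.trans h2

end DELMC
end

section
/- Let G be the group of worlds representing a truth assignment α to x_1,…,x_n (in the two-agent three-variable encoding). Then for every 1 ≤ j ≤ n and every world v of G, the formula χ_j = z_1 ∧ ¬z_2 ∧ χ^b_j ∧ ¬χ^b_{j-1} is true at v if and only if v is the first world of a z1-chain of length exactly j in G; consequently, the central world of G satisfies K̂_a χ_j if and only if α(x_j) = 1. -/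
namespace DELMC

lemma sat_atom {Agent} (M : EpiModel Agent) (w : M.World) (p : ℕ) :
    Sat M w (.atom p) ↔ M.val w p := Iff.rfl

lemma sat_neg {Agent} (M : EpiModel Agent) (w : M.World) (φ : DForm Agent) :
    Sat M w (.neg φ) ↔ ¬ Sat M w φ := Iff.rfl

lemma sat_and {Agent} (M : EpiModel Agent) (w : M.World) (φ ψ : DForm Agent) :
    Sat M w (.and φ ψ) ↔ Sat M w φ ∧ Sat M w ψ := Iff.rfl

lemma sat_khat {Agent} (M : EpiModel Agent) (w : M.World) (a : Agent) (φ : DForm Agent) :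
    Sat M w (khat a φ) ↔ ∃ v, M.rel a w v ∧ Sat M v φ := by
  constructor
  · intro h
    by_contra hc
    push_neg at hc
    exact h (fun v hv hs => hc v hv hs)
  · rintro ⟨v, h1, h2⟩ h
    exact h v h1 h2

lemma z1_inj {n m : ℕ} {j j' : Fin n} {k : Fin (j.1+2)} {k' : Fin (j'.1+2)}
    (h : (GWBase.z1 j k : GWBase n m) = GWBase.z1 j' k') : j = j' ∧ k.1 = k'.1 := by
  injection h with h1 h2
  subst h1
  exact ⟨rfl, congrArg Fin.val (eq_of_heq h2)⟩

lemma fin_ite_one (c : Prop) [Decidable c] :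
    ((1 : Fin 2) = if c then 1 else 0) ↔ c := by
  by_cases h : c <;> simp [h]

lemma fin_ite_zero (c : Prop) [Decidable c] :
    ((0 : Fin 2) = if c then 1 else 0) ↔ ¬ c := by
  by_cases h : c <;> simp [h]


def okA (t J k : ℕ) : Prop := k = J+1 ∨ (1 ≤ k ∧ J+1+(k+1)%2 ≤ t+k)
def okB (t J k : ℕ) : Prop := k = J+1 ∨ J+1+k%2 ≤ t+k

lemma stepB (t J K : ℕ) (hK : K ≤ J+1) :
    okB (t+1) J K ↔ ∃ k, k ≤ J+1 ∧ (k = K ∨ (k = K+1 ∧ K%2 = 0) ∨ (K = k+1 ∧ k%2 = 0)) ∧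
      1 ≤ k ∧ okA t J k := by
  constructor
  · intro h
    by_cases hKL : K = J+1
    · exact ⟨K, by omega, Or.inl rfl, by omega, Or.inl hKL⟩
    · by_cases hp : K % 2 = 0
      · refine ⟨K+1, by unfold okB at h; omega, Or.inr (Or.inl ⟨rfl, hp⟩), by omega, ?_⟩
        unfold okA; unfold okB at h; omega
      · refine ⟨K, by omega, Or.inl rfl, by omega, ?_⟩
        unfold okA; unfold okB at h; omega
  · rintro ⟨k, hk, hrel, hk1, hA⟩
    unfold okA at hA; unfold okB; omega

lemma stepA (t J K : ℕ) (hK : K ≤ J+1) :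
    okA (t+1) J K ↔ ∃ k, k ≤ J+1 ∧ (k = K ∨ (k = K+1 ∧ K%2 = 1) ∨ (K = k+1 ∧ k%2 = 1)) ∧
      1 ≤ k ∧ okB t J k := by
  constructor
  · intro h
    by_cases hKL : K = J+1
    · exact ⟨K, by omega, Or.inl rfl, by omega, Or.inl hKL⟩
    · by_cases hp : K % 2 = 1
      · refine ⟨K+1, by unfold okA at h; omega, Or.inr (Or.inl ⟨rfl, hp⟩), by omega, ?_⟩
        unfold okB; unfold okA at h; omega
      · refine ⟨K, by omega, Or.inl rfl, by unfold okA at h; omega, ?_⟩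
        unfold okB; unfold okA at h; omega
  · rintro ⟨k, hk, hrel, hk1, hB⟩
    unfold okB at hB; unfold okA; omega


lemma char (n : ℕ) (α : ℕ → Bool) (t : ℕ) :
    ∀ v : (groupModel2 n 0 α).World,
      (Sat (groupModel2 n 0 α) v (chiA t) ↔
        ∃ (j : Fin n) (k : Fin (j.1+2)), v.1 = GWBase.z1 j k ∧ okA t j.1 k.1) ∧
      (Sat (groupModel2 n 0 α) v (chiB t) ↔
        ∃ (j : Fin n) (k : Fin (j.1+2)), v.1 = GWBase.z1 j k ∧ okB t j.1 k.1) := by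
  induction t with
  | zero =>
    rintro ⟨u0, hmem⟩
    cases u0 with
    | z2 i _ => exact i.elim0
    | central =>
      constructor <;>
      · constructor
        · intro hs
          exact absurd hs (by simp [chiA, chiB, chiAB, Sat, groupModel2, gwVal])
        · rintro ⟨j, k, heq, _⟩
          exact absurd heq (by simp)
    | z1 J K =>
      have hK := K.isLt
      have hval : (groupModel2 n 0 α).val ⟨GWBase.z1 J K, hmem⟩ 0 ↔ K.1 = J.1+1 := by
        simp [groupModel2, gwVal]
      constructor
      · show Sat _ _ (.atom 0) ↔ _
        erw [sat_atom, hval]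
        constructor
        · intro h; exact ⟨J, K, rfl, Or.inl h⟩
        · rintro ⟨j, k, heq, hok⟩
          obtain ⟨hJ, hk⟩ := z1_inj heq
          subst hJ
          have := k.isLt
          unfold okA at hok; omega
      · show Sat _ _ (.atom 0) ↔ _
        erw [sat_atom, hval]
        constructor
        · intro h; exact ⟨J, K, rfl, Or.inl h⟩
        · rintro ⟨j, k, heq, hok⟩
          obtain ⟨hJ, hk⟩ := z1_inj heq
          subst hJ
          have := k.isLt
          unfold okB at hok; omega
  | succ t IH =>
    rintro ⟨u0, hmem⟩
    constructor
    · -- chiA (t+1)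
      erw [show chiA (t+1) = khat 0 (.and (.neg (.atom 1)) (.and (.neg (.atom 2)) (chiB t)))
        from rfl, sat_khat]
      constructor
      · rintro ⟨u, hrel, hsat⟩
        obtain ⟨h1, h2, hC⟩ := hsat
        rw [(IH u).2] at hC
        obtain ⟨j, k, hu, hok⟩ := hC
        obtain ⟨w, hwmem⟩ := u
        have hw : w = GWBase.z1 j k := hu
        subst hw
        have h1' : ¬ ((k.1 = 0 ∧ 1 = 1) ∨ (k.1 = j.1+1 ∧ 1 = 0)) := h1
        cases u0 with
        | z2 i _ => exact i.elim0
        | central =>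
          have hrel' : gwRel 0 GWBase.central (GWBase.z1 j k) := hrel
          rcases hrel' with heq | ⟨-, -, hc2⟩ | ⟨hag, -, -⟩ | hce
          · exact absurd heq (by simp)
          · exfalso; have : k.1 = 0 := hc2; omega
          · exact absurd hag (by decide)
          · exact absurd (show False from hce) (fun h => h)
        | z1 J K =>
          have hrel' : gwRel 0 (GWBase.z1 J K) (GWBase.z1 j k) := hrel
          have hkl := k.isLt
          have hKl := K.isLt
          rcases hrel' with heq | ⟨-, -, hc2⟩ | ⟨hag, -, -⟩ | hce
          · obtain ⟨hJ, hKk⟩ := z1_inj heq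
            subst hJ
            refine ⟨J, K, rfl, ?_⟩
            unfold okB at hok; unfold okA; omega
          · exfalso; have : k.1 = 0 := hc2; omega
          · exact absurd hag (by decide)
          · have hce' : J.1 = j.1 ∧ ((k.1 = K.1 + 1 ∧ (0:Fin 2) = if K.1 % 2 = 0 then 1 else 0)
              ∨ (K.1 = k.1 + 1 ∧ (0:Fin 2) = if k.1 % 2 = 0 then 1 else 0)) := hce
            obtain ⟨hJ, hca | hcb⟩ := hce'
            · rw [fin_ite_zero] at hca
              refine ⟨J, K, rfl, ?_⟩
              unfold okB at hok; unfold okA; omega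
            · rw [fin_ite_zero] at hcb
              refine ⟨J, K, rfl, ?_⟩
              unfold okB at hok; unfold okA; omega
      · rintro ⟨j, k, heq, hok⟩
        cases u0 with
        | z2 i _ => exact i.elim0
        | central => exact absurd heq (by simp)
        | z1 J K =>
          have heq' : GWBase.z1 J K = GWBase.z1 j k := heq
          obtain ⟨hJ, hKk⟩ := z1_inj heq'
          subst hJ
          have hKk' : K = k := Fin.ext hKk
          subst hKk'
          have hKl := K.isLt
          obtain ⟨k', hk'le, hc, hk'1, hB⟩ := (stepA t J.1 K.1 (by omega)).mp hok
          have hkf : k' < J.1 + 2 := by omega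
          have hα : α (J.1 + 1) = true := hmem J K rfl
          have humem : ∀ (j' : Fin n) (k'' : Fin (j'.1+2)),
              (GWBase.z1 J (⟨k', hkf⟩ : Fin (J.1+2)) : GWBase n 0) = GWBase.z1 j' k'' → α (j'.1+1) = true := by
            intro j' k'' e
            obtain ⟨e1, -⟩ := z1_inj e
            subst e1
            exact hα
          refine ⟨⟨GWBase.z1 J ⟨k', hkf⟩, humem⟩, ?_, ?_, ?_, ?_⟩
          · show gwRel 0 (GWBase.z1 J K) (GWBase.z1 J ⟨k', hkf⟩)
            rcases hc with h | ⟨h, hp⟩ | ⟨h, hp⟩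
            · exact Or.inl (congrArg (GWBase.z1 J) (Fin.ext h.symm))
            · exact Or.inr (Or.inr (Or.inr ⟨rfl, Or.inl ⟨h, (fin_ite_zero _).mpr (by omega)⟩⟩))
            · exact Or.inr (Or.inr (Or.inr ⟨rfl, Or.inr ⟨h, (fin_ite_zero _).mpr (show ¬(k' % 2 = 0) by omega)⟩⟩))
          · show ¬ ((k' = 0 ∧ 1 = 1) ∨ (k' = J.1+1 ∧ 1 = 0))
            omega
          · show ¬ ((k' = 0 ∧ 2 = 1) ∨ (k' = J.1+1 ∧ 2 = 0))
            omega
          · erw [(IH _).2]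
            exact ⟨J, ⟨k', hkf⟩, rfl, hB⟩
    · -- chiB (t+1)
      erw [show chiB (t+1) = khat 1 (.and (.neg (.atom 1)) (.and (.neg (.atom 2)) (chiA t)))
        from rfl, sat_khat]
      constructor
      · rintro ⟨u, hrel, hsat⟩
        obtain ⟨h1, h2, hC⟩ := hsat
        rw [(IH u).1] at hC
        obtain ⟨j, k, hu, hok⟩ := hC
        obtain ⟨w, hwmem⟩ := u
        have hw : w = GWBase.z1 j k := hu
        subst hw
        have h1' : ¬ ((k.1 = 0 ∧ 1 = 1) ∨ (k.1 = j.1+1 ∧ 1 = 0)) := h1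
        cases u0 with
        | z2 i _ => exact i.elim0
        | central =>
          have hrel' : gwRel 1 GWBase.central (GWBase.z1 j k) := hrel
          rcases hrel' with heq | ⟨hag, -, -⟩ | ⟨-, -, hb2⟩ | hce
          · exact absurd heq (by simp)
          · exact absurd hag (by decide)
          · exact absurd (show False from hb2) (fun h => h)
          · exact absurd (show False from hce) (fun h => h)
        | z1 J K =>
          have hrel' : gwRel 1 (GWBase.z1 J K) (GWBase.z1 j k) := hrel
          have hkl := k.isLt
          have hKl := K.isLt
          rcases hrel' with heq | ⟨hag, -, -⟩ | ⟨-, hb1, -⟩ | hce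
          · obtain ⟨hJ, hKk⟩ := z1_inj heq
            subst hJ
            refine ⟨J, K, rfl, ?_⟩
            unfold okA at hok; unfold okB; omega
          · exact absurd hag (by decide)
          · exact absurd (show False from hb1) (fun h => h)
          · have hce' : J.1 = j.1 ∧ ((k.1 = K.1 + 1 ∧ (1:Fin 2) = if K.1 % 2 = 0 then 1 else 0)
              ∨ (K.1 = k.1 + 1 ∧ (1:Fin 2) = if k.1 % 2 = 0 then 1 else 0)) := hce
            obtain ⟨hJ, hca | hcb⟩ := hce'
            · rw [fin_ite_one] at hca
              refine ⟨J, K, rfl, ?_⟩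
              unfold okA at hok; unfold okB; omega
            · rw [fin_ite_one] at hcb
              refine ⟨J, K, rfl, ?_⟩
              unfold okA at hok; unfold okB; omega
      · rintro ⟨j, k, heq, hok⟩
        cases u0 with
        | z2 i _ => exact i.elim0
        | central => exact absurd heq (by simp)
        | z1 J K =>
          have heq' : GWBase.z1 J K = GWBase.z1 j k := heq
          obtain ⟨hJ, hKk⟩ := z1_inj heq'
          subst hJ
          have hKk' : K = k := Fin.ext hKk
          subst hKk'
          have hKl := K.isLt
          obtain ⟨k', hk'le, hc, hk'1, hB⟩ := (stepB t J.1 K.1 (by omega)).mp hok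
          have hkf : k' < J.1 + 2 := by omega
          have hα : α (J.1 + 1) = true := hmem J K rfl
          have humem : ∀ (j' : Fin n) (k'' : Fin (j'.1+2)),
              (GWBase.z1 J (⟨k', hkf⟩ : Fin (J.1+2)) : GWBase n 0) = GWBase.z1 j' k'' →
                α (j'.1+1) = true := by
            intro j' k'' e
            obtain ⟨e1, -⟩ := z1_inj e
            subst e1
            exact hα
          refine ⟨⟨GWBase.z1 J ⟨k', hkf⟩, humem⟩, ?_, ?_, ?_, ?_⟩
          · show gwRel 1 (GWBase.z1 J K) (GWBase.z1 J ⟨k', hkf⟩)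
            rcases hc with h | ⟨h, hp⟩ | ⟨h, hp⟩
            · exact Or.inl (congrArg (GWBase.z1 J) (Fin.ext h.symm))
            · exact Or.inr (Or.inr (Or.inr ⟨rfl, Or.inl ⟨h, (fin_ite_one _).mpr hp⟩⟩))
            · exact Or.inr (Or.inr (Or.inr ⟨rfl, Or.inr ⟨h,
                (fin_ite_one _).mpr (show k' % 2 = 0 from hp)⟩⟩))
          · show ¬ ((k' = 0 ∧ 1 = 1) ∨ (k' = J.1+1 ∧ 1 = 0))
            omega
          · show ¬ ((k' = 0 ∧ 2 = 1) ∨ (k' = J.1+1 ∧ 2 = 0))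
            omega
          · erw [(IH _).1]
            exact ⟨J, ⟨k', hkf⟩, rfl, hB⟩


/-- Let `G` be the group of worlds representing a truth assignment `α`
to `x_1, …, x_n` (in the two-agent three-variable encoding). Then for every `1 ≤ j ≤ n`
and every world `v` of `G`, the formula `χ_j = z_1 ∧ ¬z_2 ∧ χ^b_j ∧ ¬χ^b_{j-1}` is true
at `v` if and only if `v` is the first world of a z1-chain of length exactly `j` in `G`;
consequently, the central world of `G` satisfies `K̂_a χ_j` if and only if `α x_j = 1`. -/
theorem statement13 (n : ℕ) (α : ℕ → Bool) (j : ℕ) (h1 : 1 ≤ j) (h2 : j ≤ n) :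
    (∀ v : (groupModel2 n 0 α).World,
      Sat (groupModel2 n 0 α) v (chiX j) ↔
        ∃ jj : Fin n, v.1 = GWBase.z1 jj 0 ∧ jj.1 + 1 = j) ∧
    (Sat (groupModel2 n 0 α) (central2 n 0 α) (khat 0 (chiX j)) ↔ α j = true) := by
  have hfirst : ∀ v : (groupModel2 n 0 α).World,
      Sat (groupModel2 n 0 α) v (chiX j) ↔
        ∃ jj : Fin n, v.1 = GWBase.z1 jj 0 ∧ jj.1 + 1 = j := by
    rintro ⟨u0, hmem⟩
    cases u0 with
    | z2 i _ => exact i.elim0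
    | central =>
      constructor
      · intro hs
        obtain ⟨hv1, hv2, -, -⟩ := hs
        exact absurd (show (2:ℕ) = 1 ∨ (2:ℕ) = 2 from Or.inr rfl) hv2
      · rintro ⟨jj, heq, -⟩
        exact absurd heq (by simp)
    | z1 J K =>
      have hKl := K.isLt
      constructor
      · intro hs
        obtain ⟨hv1, hv2, hB1, hB2⟩ := hs
        have hv1' : (K.1 = 0 ∧ 1 = 1) ∨ (K.1 = J.1+1 ∧ 1 = 0) := hv1
        have hK0 : K.1 = 0 := by omega
        rw [(char n α j ⟨GWBase.z1 J K, hmem⟩).2] at hB1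
        obtain ⟨j', k', heq', hok⟩ := hB1
        obtain ⟨hJ', hk'⟩ := z1_inj (show GWBase.z1 J K = GWBase.z1 j' k' from heq')
        subst hJ'
        have hnB : ¬ okB (j-1) J.1 K.1 := by
          intro h
          exact hB2 ((char n α (j-1) _).2.mpr ⟨J, K, rfl, h⟩)
        unfold okB at hok hnB
        refine ⟨J, ?_, ?_⟩
        · show GWBase.z1 J K = GWBase.z1 J 0
          exact congrArg (GWBase.z1 J) (Fin.ext (by simp [Fin.ext_iff, hK0]))
        · omega
      · rintro ⟨jj, heq, hjj⟩
        have heq' : GWBase.z1 J K = GWBase.z1 jj 0 := heq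
        obtain ⟨hJ, hK0⟩ := z1_inj heq'
        subst hJ
        have hK0' : K.1 = 0 := by simpa using hK0
        refine ⟨?_, ?_, ?_, ?_⟩
        · exact Or.inl ⟨hK0', rfl⟩
        · show ¬ ((K.1 = 0 ∧ 2 = 1) ∨ (K.1 = J.1+1 ∧ 2 = 0))
          omega
        · erw [(char n α j _).2]
          exact ⟨J, K, rfl, Or.inr (by omega)⟩
        · intro hcontr
          erw [(char n α (j-1) _).2] at hcontr
          obtain ⟨j', k', heq2, hok⟩ := hcontr
          obtain ⟨hJ2, hk2⟩ := z1_inj (show GWBase.z1 J K = GWBase.z1 j' k' from heq2)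
          subst hJ2
          unfold okB at hok
          omega
  refine ⟨hfirst, ?_⟩
  rw [sat_khat]
  constructor
  · rintro ⟨u, hrel, hs⟩
    rw [hfirst u] at hs
    obtain ⟨jj, hu, hjj⟩ := hs
    have := u.2 jj 0 hu
    rwa [hjj] at this
  · intro hα
    have hjn : j - 1 < n := by omega
    have hα' : α ((⟨j-1, hjn⟩ : Fin n).1 + 1) = true := by
      show α (j - 1 + 1) = true
      rwa [Nat.sub_add_cancel h1]
    refine ⟨⟨GWBase.z1 ⟨j-1, hjn⟩ 0, ?_⟩, ?_, ?_⟩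
    · intro j' k' e
      obtain ⟨e1, -⟩ := z1_inj e
      subst e1
      exact hα'
    · exact Or.inr (Or.inl ⟨rfl, trivial, by simp [aClique]⟩)
    · erw [hfirst]
      exact ⟨⟨j-1, hjn⟩, rfl, by show j - 1 + 1 = j; omega⟩

end DELMC
end
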